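/- If the secondary satellite lies on the x-axis of the primary body frame, i.e., r = (r_x, 0, 0), then A = r_x² − ‖r‖² = 0, and consequently for any fault in the x-gyro alone (ω̃ differing from ω only in the x component) the residual Ψ(ω̃) = A(ω̃_x − ω_x)² vanishes, so the x-gyro fault is undetectable by the residual. -/

import Mathlib

open Matrix

/-- If the secondary satellite lies on the x body axis, i.e. `r = (r_x, 0, 0)`, then
`A = r_x² − ‖r‖² = 0`, and for any fault in the x-gyro alone (ω̃ differing from ω only in the
first component, with `Ψ(ω) = 0` and the x-stationarity condition) the residual `Ψ(ω̃)` vanishes: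
the x-gyro fault is undetectable. -/
theorem stmt16 (r β ω ω' : Fin 3 → ℝ) (K : ℝ)
    (hr1 : r 1 = 0) (hr2 : r 2 = 0)
    (G : Matrix (Fin 3) (Fin 3) ℝ)
    (hG : G = vecMulVec r r - (r ⬝ᵥ r) • (1 : Matrix (Fin 3) (Fin 3) ℝ))
    (Ψ : (Fin 3 → ℝ) → ℝ)
    (hΨ : Ψ = fun w => w ⬝ᵥ (G *ᵥ w) + 2 * (β ⬝ᵥ w) + K)
    (hzero : Ψ ω = 0)
    (hstat : (G *ᵥ ω + β) 0 = 0)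
    (h1 : ω' 1 = ω 1) (h2 : ω' 2 = ω 2) :
    G 0 0 = 0 ∧ Ψ ω' = 0 := by
  subst hG hΨ
  simp only [mulVec, dotProduct, Fin.sum_univ_three, vecMulVec_apply, Matrix.sub_apply, Matrix.smul_apply,
    one_apply, Pi.add_apply, smul_eq_mul, hr1, hr2, h1, h2] at *
  have e02 : ((0:Fin 3) = 2) = False := by decide
  have e12 : ((1:Fin 3) = 2) = False := by decide
  have e20 : ((2:Fin 3) = 0) = False := by decide
  have e21 : ((2:Fin 3) = 1) = False := by decide
  simp only [e02, e12, e20, e21, if_false] at *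
  norm_num at *
  linear_combination hzero + 2 * (ω' 0 - ω 0) * hstat
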